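/- arXiv:1306.4081 — 3 statements merged into one kernel-verified Lean document; each statement's English description precedes it below -/
import Mathlib

section
/- For real z and τ > 0, the Mordell integral h(z, τ) := 2 e^{πi/4} ∫_0^∞ e^{−πτy²} cosh(2πz e^{πi/4} y)/cosh(π e^{πi/4} y) dy satisfies h(z, τ) + h(z+1, τ) = (2/√τ) e^{πi/4 + (πi/τ)(z + 1/2)²}. -/
set_option maxHeartbeats 1000000

open Complex Real

/-- The Mordell integral for real `z` and `τ > 0`, defined via the rotated contour. -/
noncomputable def mordellH (z τ : ℝ) : ℂ :=
  2 * Complex.exp (Real.pi * Complex.I / 4) *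
    ∫ y in Set.Ioi (0 : ℝ),
      Complex.exp (-(Real.pi * τ * y ^ 2)) *
        Complex.cosh (2 * Real.pi * z * Complex.exp (Real.pi * Complex.I / 4) * y) /
          Complex.cosh (Real.pi * Complex.exp (Real.pi * Complex.I / 4) * y)

open MeasureTheory

noncomputable section


def θ : ℂ := Complex.exp (Real.pi * Complex.I / 4)

lemma theta_eq : θ = (Real.sqrt 2 : ℝ)⁻¹ * (1 + Complex.I) := by
  have h : (Real.pi * Complex.I / 4 : ℂ) = ((Real.pi / 4 : ℝ) : ℂ) * Complex.I := by
    push_cast; ring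
  have hs : Real.sqrt 2 * Real.sqrt 2 = 2 := Real.mul_self_sqrt (by norm_num)
  have hs0 : Real.sqrt 2 ≠ 0 := by positivity
  rw [θ, h, Complex.exp_mul_I, ← Complex.ofReal_cos, ← Complex.ofReal_sin,
    Real.cos_pi_div_four, Real.sin_pi_div_four]
  have : Real.sqrt 2 / 2 = (Real.sqrt 2)⁻¹ := by
    field_simp
    exact Real.sq_sqrt (by norm_num)
  rw [this]
  push_cast
  ring

lemma theta_sq : θ ^ 2 = Complex.I := by
  have hs : ((Real.sqrt 2 : ℝ) : ℂ) * ((Real.sqrt 2 : ℝ) : ℂ) = 2 := by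
    rw [← Complex.ofReal_mul, Real.mul_self_sqrt (by norm_num)]; norm_num
  have hs0 : ((Real.sqrt 2 : ℝ) : ℂ) ≠ 0 := by
    simp [Real.sqrt_eq_zero']
  rw [theta_eq]
  push_cast
  field_simp
  rw [add_sq]
  rw [Complex.I_sq]
  have hs2 : ((Real.sqrt 2 : ℝ) : ℂ) ^ 2 = 2 := by rw [sq]; exact hs
  linear_combination (-1 : ℂ) * Complex.I * hs2

lemma mul_theta_eq (r : ℝ) : (r : ℂ) * θ = ((r / Real.sqrt 2 : ℝ) : ℂ) +
    ((r / Real.sqrt 2 : ℝ) : ℂ) * Complex.I := by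
  have hs0 : (Real.sqrt 2 : ℝ) ≠ 0 := by positivity
  rw [theta_eq]
  push_cast
  field_simp

/-- The key lower bound : `‖cosh (π θ y)‖ ≥ 1` for all real `y`. -/
lemma one_le_norm_cosh (y : ℝ) : 1 ≤ ‖Complex.cosh ((Real.pi : ℂ) * θ * y)‖ := by
  set u : ℝ := Real.pi * y / Real.sqrt 2 with hu
  have h1 : (Real.pi : ℂ) * θ * y = (u : ℂ) + (u : ℂ) * Complex.I := by
    have := mul_theta_eq (Real.pi * y)
    calc (Real.pi : ℂ) * θ * y = ((Real.pi * y : ℝ) : ℂ) * θ := by push_cast; ring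
    _ = _ := by rw [this]
  rw [h1, Complex.cosh_add, Complex.cosh_mul_I, Complex.sinh_mul_I,
    ← Complex.ofReal_cosh, ← Complex.ofReal_sinh, ← Complex.ofReal_cos, ← Complex.ofReal_sin]
  have h2 : (Real.cosh u : ℂ) * (Real.cos u : ℂ) + (Real.sinh u : ℂ) * ((Real.sin u : ℂ) * Complex.I)
      = ((Real.cosh u * Real.cos u : ℝ) : ℂ) + ((Real.sinh u * Real.sin u : ℝ) : ℂ) * Complex.I := by
    push_cast; ring
  rw [h2, Complex.norm_add_mul_I]
  rw [show (1 : ℝ) = Real.sqrt 1 from (Real.sqrt_one).symm]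
  apply Real.sqrt_le_sqrt
  have hcosh : Real.cosh u ^ 2 = Real.sinh u ^ 2 + 1 := Real.cosh_sq u
  have hsc : Real.sin u ^ 2 + Real.cos u ^ 2 = 1 := Real.sin_sq_add_cos_sq u
  have hsq : u ^ 2 ≤ Real.sinh u ^ 2 := by
    rcases le_or_gt 0 u with h | h
    · nlinarith [Real.self_le_sinh_iff.mpr h]
    · have h5 : Real.sinh u < u := Real.sinh_lt_self_iff.mpr h
      nlinarith
  have hsin : Real.sin u ^ 2 ≤ Real.sinh u ^ 2 := by
    have h3 : |Real.sin u| ≤ |u| := Real.abs_sin_le_abs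
    have h6 : Real.sin u ^ 2 ≤ u ^ 2 := by
      have h7 := mul_self_le_mul_self (abs_nonneg _) h3
      rw [abs_mul_abs_self, abs_mul_abs_self] at h7
      simpa [sq] using h7
    linarith
  nlinarith [Real.cosh_pos u, hcosh]

lemma norm_cosh_le (w : ℂ) : ‖Complex.cosh w‖ ≤ Real.exp |w.re| := by
  have h : Complex.cosh w = (Complex.exp w + Complex.exp (-w)) / 2 := rfl
  rw [h, norm_div]
  have h2 : ‖(2 : ℂ)‖ = 2 := by norm_num
  rw [h2, div_le_iff₀ (by norm_num : (0:ℝ) < 2)]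
  have e1 : ‖Complex.exp w‖ ≤ Real.exp |w.re| := by
    rw [Complex.norm_exp]
    exact Real.exp_le_exp.mpr (le_abs_self _)
  have e2 : ‖Complex.exp (-w)‖ ≤ Real.exp |w.re| := by
    rw [Complex.norm_exp, Complex.neg_re]
    exact Real.exp_le_exp.mpr (neg_le_abs _)
  calc ‖Complex.exp w + Complex.exp (-w)‖ ≤ ‖Complex.exp w‖ + ‖Complex.exp (-w)‖ :=
        norm_add_le _ _
    _ ≤ Real.exp |w.re| * 2 := by linarith

lemma cosh_ne (y : ℝ) : Complex.cosh ((Real.pi : ℂ) * θ * y) ≠ 0 := by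
  intro h
  have := one_le_norm_cosh y
  rw [h] at this
  norm_num at this

lemma re_A (r y : ℝ) : ((r : ℂ) * θ * y).re = r * y / Real.sqrt 2 := by
  have : (r : ℂ) * θ * y = ((r * y : ℝ) : ℂ) * θ := by push_cast; ring
  rw [this, mul_theta_eq]
  simp

lemma integrable_f (z τ : ℝ) (hτ : 0 < τ) :
    IntegrableOn (fun y : ℝ => Complex.exp (-(Real.pi * τ * y ^ 2)) *
      Complex.cosh (2 * Real.pi * z * θ * y) / Complex.cosh (Real.pi * θ * y))
      (Set.Ioi 0) := by
  set a : ℝ := Real.sqrt 2 * Real.pi * |z| with ha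
  have hb : (0 : ℝ) < (((Real.pi * τ : ℝ) : ℂ)).re := by
    simpa using mul_pos Real.pi_pos hτ
  have hbound : Integrable (fun y : ℝ =>
      Complex.exp (-((Real.pi * τ : ℝ) : ℂ) * y ^ 2 + (a : ℂ) * y + 0)) :=
    integrable_cexp_quadratic hb _ _
  apply Integrable.mono' (hbound.norm.restrict)
  · apply ContinuousOn.aestronglyMeasurable _ measurableSet_Ioi
    apply Continuous.continuousOn
    apply Continuous.div
    · exact (Complex.continuous_exp.comp (by fun_prop)).mul
        (Complex.continuous_cosh.comp (by fun_prop))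
    · exact Complex.continuous_cosh.comp (by fun_prop)
    · exact fun y => cosh_ne y
  · filter_upwards [ae_restrict_mem measurableSet_Ioi] with y hy
    have hy0 : (0 : ℝ) < y := hy
    rw [norm_div]
    have hd : (1 : ℝ) ≤ ‖Complex.cosh ((Real.pi : ℂ) * θ * y)‖ := one_le_norm_cosh y
    have step1 : ‖Complex.exp (-(Real.pi * τ * y ^ 2 : ℝ) : ℂ) *
        Complex.cosh (2 * (Real.pi : ℂ) * z * θ * y)‖ /
        ‖Complex.cosh ((Real.pi : ℂ) * θ * y)‖ ≤
        ‖Complex.exp (-(Real.pi * τ * y ^ 2 : ℝ) : ℂ) *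
        Complex.cosh (2 * (Real.pi : ℂ) * z * θ * y)‖ :=
      div_le_self (norm_nonneg _) hd
    have harg : (-(Real.pi * (τ : ℂ) * (y : ℂ) ^ 2)) = ((-(Real.pi * τ * y ^ 2) : ℝ) : ℂ) := by
      push_cast; ring
    have hAre : ((2 * Real.pi * z : ℝ) : ℂ) * θ * y = 2 * (Real.pi : ℂ) * z * θ * y := by
      push_cast; ring
    have habs : |(2 * Real.pi * z) * y / Real.sqrt 2| = a * y := by
      have hs : (2 * Real.pi * z) * y / Real.sqrt 2 = Real.sqrt 2 * Real.pi * z * y := by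
        have h2 : Real.sqrt 2 * Real.sqrt 2 = 2 := Real.mul_self_sqrt (by norm_num)
        field_simp
        linear_combination (-z) * h2
      rw [hs, ha, abs_mul, abs_mul, abs_mul, _root_.abs_of_nonneg (Real.sqrt_nonneg 2),
        _root_.abs_of_nonneg Real.pi_pos.le, _root_.abs_of_nonneg hy0.le]
    have hcosh : ‖Complex.cosh (2 * (Real.pi : ℂ) * z * θ * y)‖ ≤ Real.exp (a * y) := by
      have := norm_cosh_le (((2 * Real.pi * z : ℝ) : ℂ) * θ * y)
      rw [re_A, habs] at this
      rwa [hAre] at this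
    have hexp : ‖Complex.exp (-(Real.pi * (τ : ℂ) * (y : ℂ) ^ 2))‖ =
        Real.exp (-(Real.pi * τ * y ^ 2)) := by
      rw [harg, Complex.norm_exp, Complex.ofReal_re]
    have hg : ‖Complex.exp (-((Real.pi * τ : ℝ) : ℂ) * y ^ 2 + (a : ℂ) * y + 0)‖ =
        Real.exp (-(Real.pi * τ * y ^ 2) + a * y) := by
      have : (-((Real.pi * τ : ℝ) : ℂ) * y ^ 2 + (a : ℂ) * y + 0) =
          ((-(Real.pi * τ * y ^ 2) + a * y : ℝ) : ℂ) := by push_cast; ring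
      rw [this, Complex.norm_exp, Complex.ofReal_re]
    calc ‖Complex.exp (-(Real.pi * (τ : ℂ) * (y : ℂ) ^ 2)) *
          Complex.cosh (2 * (Real.pi : ℂ) * z * θ * y)‖ /
          ‖Complex.cosh ((Real.pi : ℂ) * θ * y)‖
        ≤ ‖Complex.exp (-(Real.pi * (τ : ℂ) * (y : ℂ) ^ 2))‖ *
          ‖Complex.cosh (2 * (Real.pi : ℂ) * z * θ * y)‖ := by
          rw [← norm_mul]; exact div_le_self (norm_nonneg _) hd
      _ ≤ Real.exp (-(Real.pi * τ * y ^ 2)) * Real.exp (a * y) := by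
          rw [hexp]
          exact mul_le_mul_of_nonneg_left hcosh (Real.exp_pos _).le
      _ = ‖Complex.exp (-((Real.pi * τ : ℝ) : ℂ) * y ^ 2 + (a : ℂ) * y + 0)‖ := by
          rw [hg, ← Real.exp_add]

lemma combine (z τ y : ℝ) :
    Complex.exp (-(Real.pi * τ * y ^ 2)) * Complex.cosh (2 * Real.pi * z * θ * y) /
      Complex.cosh (Real.pi * θ * y) +
    Complex.exp (-(Real.pi * τ * y ^ 2)) * Complex.cosh (2 * Real.pi * (z + 1 : ℝ) * θ * y) /
      Complex.cosh (Real.pi * θ * y) =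
    Complex.exp (-(Real.pi * τ * y ^ 2) + Real.pi * (2 * z + 1) * θ * y) +
    Complex.exp (-(Real.pi * τ * y ^ 2) + -(Real.pi * (2 * z + 1) * θ * y)) := by
  set p : ℂ := Real.pi * (2 * (z : ℂ) + 1) * θ * y with hp
  set q : ℂ := Real.pi * θ * (y : ℂ) with hq
  have hD : Complex.cosh q ≠ 0 := cosh_ne y
  have key : Complex.cosh (2 * Real.pi * (z : ℂ) * θ * y) +
      Complex.cosh (2 * Real.pi * ((z : ℝ) + 1 : ℝ) * θ * y) =
      2 * Complex.cosh p * Complex.cosh q := by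
    have h1 := Complex.cosh_add p q
    have h2 := Complex.cosh_sub p q
    have e1 : p + q = 2 * Real.pi * ((z : ℝ) + 1 : ℝ) * θ * y := by
      rw [hp, hq]; push_cast; ring
    have e2 : p - q = 2 * Real.pi * (z : ℂ) * θ * y := by
      rw [hp, hq]; push_cast; ring
    rw [e1] at h1; rw [e2] at h2
    rw [h1, h2]; ring
  have hple : Real.pi * (2 * (z : ℂ) + 1) * θ * y = (Real.pi : ℂ) * (2 * z + 1) * θ * y := by
    push_cast; ring
  rw [← add_div, ← mul_add, key, mul_div_assoc,
    mul_div_cancel_right₀ (2 * Complex.cosh p) hD, Complex.two_cosh, mul_add,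
    ← Complex.exp_add, ← Complex.exp_add]

lemma gauss (z τ : ℝ) (hτ : 0 < τ) :
    (∫ y in Set.Ioi (0 : ℝ),
      (Complex.exp (-(Real.pi * τ * y ^ 2) + Real.pi * (2 * z + 1) * θ * y) +
       Complex.exp (-(Real.pi * τ * y ^ 2) + -(Real.pi * (2 * z + 1) * θ * y)))) =
    ((Real.sqrt τ : ℝ) : ℂ)⁻¹ *
      Complex.exp (Real.pi * Complex.I / τ * ((z : ℂ) + 1 / 2) ^ 2) := by
  set c : ℂ := Real.pi * (2 * (z : ℂ) + 1) * θ with hc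
  set b : ℂ := ((Real.pi * τ : ℝ) : ℂ) with hb
  have hbre : 0 < b.re := by simpa [hb] using mul_pos Real.pi_pos hτ
  have hEint : Integrable (fun y : ℝ => Complex.exp (-b * y ^ 2 + c * y + 0)) :=
    integrable_cexp_quadratic hbre c 0
  have hFint : Integrable (fun y : ℝ => Complex.exp (-b * y ^ 2 + -c * y + 0)) :=
    integrable_cexp_quadratic hbre (-c) 0
  have hfun : ∀ y : ℝ,
      Complex.exp (-(Real.pi * τ * y ^ 2) + Real.pi * (2 * z + 1) * θ * y) +
      Complex.exp (-(Real.pi * τ * y ^ 2) + -(Real.pi * (2 * z + 1) * θ * y)) =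
      Complex.exp (-b * y ^ 2 + c * y + 0) + Complex.exp (-b * y ^ 2 + -c * y + 0) := by
    intro y
    have t1 : (-(Real.pi * τ * (y:ℂ) ^ 2) + Real.pi * (2 * (z:ℂ) + 1) * θ * y) =
        -b * y ^ 2 + c * y + 0 := by rw [hb, hc]; push_cast; ring
    have t2 : (-(Real.pi * τ * (y:ℂ) ^ 2) + -(Real.pi * (2 * (z:ℂ) + 1) * θ * y)) =
        -b * y ^ 2 + -c * y + 0 := by rw [hb, hc]; push_cast; ring
    rw [t1, t2]
  rw [setIntegral_congr_fun measurableSet_Ioi (fun y _ => hfun y)]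
  rw [integral_add (hEint.restrict) (hFint.restrict)]
  have hneg : ∀ y : ℝ, Complex.exp (-b * y ^ 2 + -c * y + 0) =
      (fun t : ℝ => Complex.exp (-b * t ^ 2 + c * t + 0)) (-y) := by
    intro y
    simp only
    congr 1
    push_cast
    ring
  rw [setIntegral_congr_fun measurableSet_Ioi (fun y _ => hneg y)]
  rw [integral_comp_neg_Ioi (0 : ℝ) (fun t : ℝ => Complex.exp (-b * t ^ 2 + c * t + 0))]
  rw [neg_zero]
  have hsplit : (∫ y in Set.Iic (0:ℝ), Complex.exp (-b * y ^ 2 + c * y + 0)) +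
      (∫ y in Set.Ioi (0:ℝ), Complex.exp (-b * y ^ 2 + c * y + 0)) =
      ∫ y : ℝ, Complex.exp (-b * y ^ 2 + c * y + 0) :=
    intervalIntegral.integral_Iic_add_Ioi (hEint.integrableOn) (hEint.integrableOn)
  rw [add_comm, hsplit]
  have heval := integral_cexp_quadratic (b := -b) (by simpa using hbre) c 0
  rw [heval]
  have hτ0 : (τ : ℂ) ≠ 0 := by exact_mod_cast hτ.ne'
  have hπ0 : ((Real.pi : ℝ) : ℂ) ≠ 0 := by exact_mod_cast Real.pi_ne_zero
  congr 1
  · have h1 : ((Real.pi : ℂ) / -(-b)) = ((τ⁻¹ : ℝ) : ℂ) := by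
      rw [neg_neg, hb]
      push_cast
      field_simp
    rw [h1]
    have h2 : ((1 / 2 : ℂ)) = (((1 / 2 : ℝ) : ℂ)) := by norm_num
    rw [h2, ← Complex.ofReal_cpow (inv_nonneg.mpr hτ.le)]
    rw [show (τ⁻¹ : ℝ) ^ (1 / 2 : ℝ) = Real.sqrt τ⁻¹ by rw [Real.sqrt_eq_rpow]]
    rw [Real.sqrt_inv]
    push_cast
    ring
  · congr 1
    rw [hc]
    have hexp : (Real.pi * (2 * (z : ℂ) + 1) * θ) ^ 2 =
        (Real.pi * (2 * (z : ℂ) + 1)) ^ 2 * θ ^ 2 := by ring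
    rw [hexp, theta_sq, hb]
    push_cast
    field_simp
    ring


theorem mordell_shift (z τ : ℝ) (hτ : 0 < τ) :
    mordellH z τ + mordellH (z + 1) τ =
      2 / Real.sqrt τ *
        Complex.exp (Real.pi * Complex.I / 4 +
          Real.pi * Complex.I / τ * (z + 1 / 2) ^ 2) := by
  unfold mordellH
  rw [show Complex.exp ((Real.pi : ℂ) * Complex.I / 4) = θ from rfl]
  rw [← mul_add]
  rw [← MeasureTheory.integral_add (integrable_f z τ hτ) (integrable_f (z + 1) τ hτ)]
  rw [MeasureTheory.setIntegral_congr_fun measurableSet_Ioi (fun y _ => combine z τ y)]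
  rw [gauss z τ hτ]
  rw [Complex.exp_add]
  rw [show θ = Complex.exp ((Real.pi : ℂ) * Complex.I / 4) from rfl]
  ring

end
end

section
/- For real z, τ > 0, and natural number m ≥ 0, iterating the conjugated shift identity gives h(z − 1/2, −τ) = (−1)^{m+1} h(z + m + 1/2, −τ) + (2/√τ) e^{−πi/4 − πiz²/τ} F_m(1/2 − z/τ, −1/(2τ)), where F_m(w, σ) = Σ_{k=0}^m exp(2πi(wk + σk²)). -/
open Complex Real

open MeasureTheory

noncomputable def F (m : ℕ) (w σ : ℝ) : ℂ :=
  ∑ k ∈ Finset.range (m + 1), Complex.exp (2 * Real.pi * Complex.I * (w * k + σ * k ^ 2))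

lemma expE : Complex.exp (Real.pi * Complex.I / 4) =
    ((Real.sqrt 2 / 2 : ℝ) : ℂ) * (1 + Complex.I) := by
  have h : (Real.pi : ℂ) * Complex.I / 4 = ((Real.pi / 4 : ℝ) : ℂ) * Complex.I := by
    push_cast; ring
  rw [h, Complex.exp_mul_I, ← Complex.ofReal_cos, ← Complex.ofReal_sin,
    Real.cos_pi_div_four, Real.sin_pi_div_four]
  push_cast; ring

lemma expE_sq : Complex.exp (Real.pi * Complex.I / 4) ^ 2 = Complex.I := by
  rw [sq, ← Complex.exp_add]
  have : (Real.pi : ℂ) * Complex.I / 4 + (Real.pi : ℂ) * Complex.I / 4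
      = ((Real.pi / 2 : ℝ) : ℂ) * Complex.I := by
    push_cast; ring
  rw [this, Complex.exp_mul_I, ← Complex.ofReal_cos, ← Complex.ofReal_sin,
    Real.cos_pi_div_two, Real.sin_pi_div_two]
  push_cast; ring

lemma norm_cosh_diag (x : ℝ) : 1 ≤ ‖Complex.cosh ((x : ℂ) + (x : ℂ) * Complex.I)‖ := by
  have h : Complex.cosh ((x : ℂ) + (x : ℂ) * Complex.I)
      = ((Real.cosh x * Real.cos x : ℝ) : ℂ) + ((Real.sinh x * Real.sin x : ℝ) : ℂ) * Complex.I := by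
    rw [Complex.cosh_add, Complex.cosh_mul_I, Complex.sinh_mul_I,
      ← Complex.ofReal_cosh, ← Complex.ofReal_sinh, ← Complex.ofReal_cos, ← Complex.ofReal_sin]
    push_cast; ring
  have hs : Real.sin x ^ 2 ≤ Real.sinh x ^ 2 := by
    have h1 : |Real.sin x| ≤ |x| := Real.abs_sin_le_abs
    have h2 : |x| ≤ |Real.sinh x| := by
      rw [Real.abs_sinh]; exact Real.self_le_sinh_iff.mpr (abs_nonneg x)
    calc Real.sin x ^ 2 = |Real.sin x| ^ 2 := (_root_.sq_abs _).symm
      _ ≤ |Real.sinh x| ^ 2 := by nlinarith [abs_nonneg (Real.sin x)]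
      _ = Real.sinh x ^ 2 := _root_.sq_abs _
  have hn : 1 ≤ Complex.normSq (Complex.cosh ((x : ℂ) + (x : ℂ) * Complex.I)) := by
    rw [h, Complex.normSq_add_mul_I]
    nlinarith [Real.cosh_sq x, Real.sin_sq_add_cos_sq x, hs]
  have := Complex.sq_norm (Complex.cosh ((x : ℂ) + (x : ℂ) * Complex.I))
  nlinarith [norm_nonneg (Complex.cosh ((x : ℂ) + (x : ℂ) * Complex.I))]

lemma piE_eq (y : ℝ) : (Real.pi : ℂ) * Complex.exp (Real.pi * Complex.I / 4) * (y : ℂ)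
    = ((Real.pi * (Real.sqrt 2 / 2) * y : ℝ) : ℂ)
      + ((Real.pi * (Real.sqrt 2 / 2) * y : ℝ) : ℂ) * Complex.I := by
  rw [expE]; push_cast; ring

lemma norm_cosh_piE (y : ℝ) :
    1 ≤ ‖Complex.cosh ((Real.pi : ℂ) * Complex.exp (Real.pi * Complex.I / 4) * (y : ℂ))‖ := by
  rw [piE_eq]; exact norm_cosh_diag _

lemma cosh_piE_ne (y : ℝ) :
    Complex.cosh ((Real.pi : ℂ) * Complex.exp (Real.pi * Complex.I / 4) * (y : ℂ)) ≠ 0 := by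
  intro h
  have := norm_cosh_piE y
  rw [h] at this; simp at this
  exact absurd this (by norm_num)


lemma integrable_mordell (z τ : ℝ) (hτ : 0 < τ) :
    Integrable (fun y : ℝ => Complex.exp (-(Real.pi * τ * y ^ 2)) *
      Complex.cosh (2 * Real.pi * z * Complex.exp (Real.pi * Complex.I / 4) * y) /
        Complex.cosh (Real.pi * Complex.exp (Real.pi * Complex.I / 4) * y)) := by
  set E := Complex.exp (Real.pi * Complex.I / 4) with hE
  have hcont : Continuous (fun y : ℝ => Complex.exp (-(Real.pi * τ * y ^ 2)) *
      Complex.cosh (2 * Real.pi * z * E * y) / Complex.cosh (Real.pi * E * y)) := by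
    apply Continuous.div
    · fun_prop
    · fun_prop
    · exact fun y => cosh_piE_ne y
  set c : ℝ := 2 * Real.pi * |z| with hc
  have hcnn : 0 ≤ c := by positivity
  have hb : ((-(Real.pi * τ) : ℝ) : ℂ).re < 0 := by
    simp only [Complex.ofReal_re]
    nlinarith [Real.pi_pos]
  have hint1 : Integrable (fun y : ℝ => Complex.exp (((-(Real.pi * τ) : ℝ) : ℂ) * y ^ 2
      + ((c : ℝ) : ℂ) * y + 0)) := integrable_cexp_quadratic' hb _ _
  have hint2 : Integrable (fun y : ℝ => Complex.exp (((-(Real.pi * τ) : ℝ) : ℂ) * y ^ 2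
      + ((-c : ℝ) : ℂ) * y + 0)) := integrable_cexp_quadratic' hb _ _
  refine ((hint1.norm.add hint2.norm).mono' hcont.aestronglyMeasurable ?_)
  filter_upwards with y
  have hEnorm : ‖E‖ = 1 := by
    rw [hE, Complex.norm_exp]; simp
  have harg1 : ((-(Real.pi * τ) : ℝ) : ℂ) * (y : ℂ) ^ 2 + ((c : ℝ) : ℂ) * (y : ℂ) + 0
      = ((-(Real.pi * τ) * y ^ 2 + c * y : ℝ) : ℂ) := by push_cast; ring
  have harg2 : ((-(Real.pi * τ) : ℝ) : ℂ) * (y : ℂ) ^ 2 + ((-c : ℝ) : ℂ) * (y : ℂ) + 0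
      = ((-(Real.pi * τ) * y ^ 2 + -(c * y) : ℝ) : ℂ) := by push_cast; ring
  have hnum1 : ‖Complex.exp (-((Real.pi : ℂ) * τ * y ^ 2))‖ = Real.exp (-(Real.pi * τ * y ^ 2)) := by
    have : -((Real.pi : ℂ) * τ * y ^ 2) = ((-(Real.pi * τ * y ^ 2) : ℝ) : ℂ) := by push_cast; ring
    rw [this, Complex.norm_exp_ofReal]
  have hcosh_bound : ‖Complex.cosh (2 * (Real.pi : ℂ) * z * E * y)‖ ≤ Real.exp (c * |y|) := by
    have hre : ∀ s : ℂ, ‖s‖ = c * |y| →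
        ‖Complex.exp s‖ ≤ Real.exp (c * |y|) := by
      intro s hs
      rw [Complex.norm_exp]
      exact Real.exp_le_exp.mpr (le_trans (Complex.re_le_norm s) (le_of_eq hs))
    have habs : ‖2 * (Real.pi : ℂ) * z * E * y‖ = c * |y| := by
      simp only [norm_mul, Complex.norm_two, Complex.norm_real, Real.norm_eq_abs, hEnorm]
      rw [_root_.abs_of_nonneg Real.pi_pos.le, hc]
      ring
    rw [Complex.cosh, norm_div, Complex.norm_two]
    have h1 : ‖Complex.exp (2 * (Real.pi : ℂ) * z * E * y)
        + Complex.exp (-(2 * (Real.pi : ℂ) * z * E * y))‖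
        ≤ Real.exp (c * |y|) + Real.exp (c * |y|) := by
      refine le_trans (norm_add_le _ _) (add_le_add (hre _ habs) (hre _ ?_))
      rw [norm_neg]; exact habs
    linarith
  have hden := norm_cosh_piE y
  calc ‖Complex.exp (-((Real.pi : ℂ) * τ * y ^ 2)) * Complex.cosh (2 * (Real.pi : ℂ) * z * E * y)
        / Complex.cosh ((Real.pi : ℂ) * E * y)‖
      = ‖Complex.exp (-((Real.pi : ℂ) * τ * y ^ 2)) * Complex.cosh (2 * (Real.pi : ℂ) * z * E * y)‖
        / ‖Complex.cosh ((Real.pi : ℂ) * E * y)‖ := norm_div _ _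
    _ ≤ ‖Complex.exp (-((Real.pi : ℂ) * τ * y ^ 2)) * Complex.cosh (2 * (Real.pi : ℂ) * z * E * y)‖ :=
        div_le_self (norm_nonneg _) hden
    _ ≤ Real.exp (-(Real.pi * τ * y ^ 2)) * Real.exp (c * |y|) := by
        rw [norm_mul, hnum1]
        exact mul_le_mul_of_nonneg_left hcosh_bound (Real.exp_pos _).le
    _ = Real.exp (-(Real.pi * τ) * y ^ 2 + c * |y|) := by rw [← Real.exp_add]; ring_nf
    _ ≤ ‖Complex.exp (((-(Real.pi * τ) : ℝ) : ℂ) * y ^ 2 + ((c : ℝ) : ℂ) * y + 0)‖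
        + ‖Complex.exp (((-(Real.pi * τ) : ℝ) : ℂ) * y ^ 2 + ((-c : ℝ) : ℂ) * y + 0)‖ := by
        rw [harg1, harg2,
          Complex.norm_exp_ofReal, Complex.norm_exp_ofReal]
        rcases le_or_gt 0 y with hy | hy
        · rw [_root_.abs_of_nonneg hy]
          have := (Real.exp_pos (-(Real.pi * τ) * y ^ 2 + -(c * y))).le
          linarith
        · rw [_root_.abs_of_neg hy]
          have := (Real.exp_pos (-(Real.pi * τ) * y ^ 2 + c * y)).le
          have : Real.exp (-(Real.pi * τ) * y ^ 2 + c * -y)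
              = Real.exp (-(Real.pi * τ) * y ^ 2 + -(c * y)) := by ring_nf
          linarith [(Real.exp_pos (-(Real.pi * τ) * y ^ 2 + c * y)).le, this,
            (Real.exp_pos (-(Real.pi * τ) * y ^ 2 + -(c * y))).le]


lemma one_step (z τ : ℝ) (hτ : 0 < τ) :
    mordellH z τ + mordellH (z + 1) τ =
      2 / Real.sqrt τ *
        Complex.exp (Real.pi * Complex.I / 4 + Real.pi * Complex.I * (z + 1 / 2) ^ 2 / τ) := by
  have hπ : (Real.pi : ℂ) ≠ 0 := by exact_mod_cast Real.pi_ne_zero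
  have hτ0 : (τ : ℂ) ≠ 0 := by exact_mod_cast hτ.ne'
  set E := Complex.exp (Real.pi * Complex.I / 4) with hE
  set B : ℂ := ((-(Real.pi * τ) : ℝ) : ℂ) with hB
  set C : ℂ := (Real.pi : ℂ) * (2 * z + 1) * E with hC
  have hb : B.re < 0 := by
    rw [hB]; simp only [Complex.ofReal_re]; nlinarith [Real.pi_pos]
  -- pointwise identity
  have key : ∀ y : ℝ,
      Complex.exp (-(Real.pi * τ * y ^ 2)) * Complex.cosh (2 * Real.pi * z * E * y) /
          Complex.cosh (Real.pi * E * y)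
        + Complex.exp (-(Real.pi * τ * y ^ 2)) * Complex.cosh (2 * Real.pi * ((z + 1 : ℝ) : ℂ) * E * y) /
          Complex.cosh (Real.pi * E * y)
      = Complex.exp (B * y ^ 2 + C * y + 0) + Complex.exp (B * y ^ 2 + -C * y + 0) := by
    intro y
    have hD := cosh_piE_ne y
    set W : ℂ := -((Real.pi : ℂ) * τ * y ^ 2) with hW
    set V : ℂ := C * y with hV
    have e1 : 2 * (Real.pi : ℂ) * z * E * y = V - (Real.pi : ℂ) * E * y := by
      rw [hV, hC]; push_cast; ring
    have e2 : 2 * (Real.pi : ℂ) * (z + 1 : ℝ) * E * y = V + (Real.pi : ℂ) * E * y := by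
      rw [hV, hC]; push_cast; ring
    rw [e1, e2]
    have harg1 : B * (y : ℂ) ^ 2 + C * y + 0 = W + V := by
      rw [hW, hV, hB]; push_cast; ring
    have harg2 : B * (y : ℂ) ^ 2 + -C * y + 0 = W + -V := by
      rw [hW, hV, hB]; push_cast; ring
    rw [harg1, harg2, Complex.exp_add, Complex.exp_add]
    have hsum : Complex.cosh (V - (Real.pi : ℂ) * E * y) + Complex.cosh (V + (Real.pi : ℂ) * E * y)
        = 2 * Complex.cosh V * Complex.cosh ((Real.pi : ℂ) * E * y) := by
      rw [Complex.cosh_sub, Complex.cosh_add]; ring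
    have h2c := Complex.two_cosh (x := V)
    calc Complex.exp W * Complex.cosh (V - (Real.pi : ℂ) * E * y) / Complex.cosh ((Real.pi : ℂ) * E * y)
          + Complex.exp W * Complex.cosh (V + (Real.pi : ℂ) * E * y) / Complex.cosh ((Real.pi : ℂ) * E * y)
        = Complex.exp W * ((Complex.cosh (V - (Real.pi : ℂ) * E * y)
            + Complex.cosh (V + (Real.pi : ℂ) * E * y)) / Complex.cosh ((Real.pi : ℂ) * E * y)) := by
          ring
      _ = Complex.exp W * ((2 * Complex.cosh V * Complex.cosh ((Real.pi : ℂ) * E * y))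
            / Complex.cosh ((Real.pi : ℂ) * E * y)) := by rw [hsum]
      _ = Complex.exp W * (2 * Complex.cosh V) := by
          rw [mul_div_cancel_right₀ _ hD]
      _ = Complex.exp W * (Complex.exp V + Complex.exp (-V)) := by rw [h2c]
      _ = Complex.exp W * Complex.exp V + Complex.exp W * Complex.exp (-V) := by ring
  have hint1 : Integrable (fun y : ℝ => Complex.exp (B * y ^ 2 + C * y + 0)) :=
    integrable_cexp_quadratic' hb _ _
  have hint2 : Integrable (fun y : ℝ => Complex.exp (B * y ^ 2 + -C * y + 0)) :=
    integrable_cexp_quadratic' hb _ _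
  have step1 : mordellH z τ + mordellH (z + 1) τ
      = 2 * E * ∫ y in Set.Ioi (0 : ℝ),
          (Complex.exp (B * y ^ 2 + C * y + 0) + Complex.exp (B * y ^ 2 + -C * y + 0)) := by
    rw [mordellH, mordellH, ← mul_add, ← hE]
    congr 1
    rw [← integral_add ((integrable_mordell z τ hτ).integrableOn)
      ((integrable_mordell (z + 1) τ hτ).integrableOn)]
    exact setIntegral_congr_fun measurableSet_Ioi fun y _ => key y
  have step2 : (∫ y in Set.Ioi (0 : ℝ),
        (Complex.exp (B * y ^ 2 + C * y + 0) + Complex.exp (B * y ^ 2 + -C * y + 0)))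
      = ∫ y : ℝ, Complex.exp (B * y ^ 2 + C * y + 0) := by
    rw [integral_add hint1.integrableOn hint2.integrableOn]
    have hneg : (∫ y in Set.Ioi (0 : ℝ), Complex.exp (B * y ^ 2 + -C * y + 0))
        = ∫ y in Set.Iic (0 : ℝ), Complex.exp (B * y ^ 2 + C * y + 0) := by
      have hcn := integral_comp_neg_Ioi (0 : ℝ) (fun y => Complex.exp (B * y ^ 2 + C * y + 0))
      rw [neg_zero] at hcn
      rw [← hcn]
      refine setIntegral_congr_fun measurableSet_Ioi fun y _ => ?_
      congr 1
      push_cast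
      ring
    rw [hneg, add_comm]
    exact intervalIntegral.integral_Iic_add_Ioi hint1.integrableOn hint1.integrableOn
  have step3 : (∫ y : ℝ, Complex.exp (B * y ^ 2 + C * y + 0))
      = ((Real.sqrt τ : ℝ) : ℂ)⁻¹ *
        Complex.exp ((Real.pi : ℂ) * Complex.I * (z + 1 / 2) ^ 2 / τ) := by
    rw [integral_cexp_quadratic hb C 0]
    congr 1
    · have h1 : (Real.pi : ℂ) / -B = ((τ⁻¹ : ℝ) : ℂ) := by
        rw [hB]; push_cast; field_simp
      rw [h1]
      have h2 : ((1 : ℂ) / 2) = ((1 / 2 : ℝ) : ℂ) := by norm_num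
      rw [h2, ← Complex.ofReal_cpow (by positivity)]
      have h4 : τ⁻¹ ^ ((1 : ℝ) / 2) = (Real.sqrt τ)⁻¹ := by
        rw [← Real.sqrt_eq_rpow, Real.sqrt_inv]
      rw [h4, Complex.ofReal_inv]
    · congr 1
      have hC2 : C ^ 2 = (Real.pi : ℂ) ^ 2 * (2 * z + 1) ^ 2 * Complex.I := by
        rw [hC, mul_pow, mul_pow, expE_sq]
      rw [hC2, hB]
      push_cast
      field_simp
      ring
  rw [step1, step2, step3]
  rw [Complex.exp_add, hE]
  have h3 : ((Real.sqrt τ : ℝ) : ℂ) ≠ 0 := by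
    exact_mod_cast (Real.sqrt_pos.mpr hτ).ne'
  field_simp


lemma conj_step (x τ : ℝ) (hτ : 0 < τ) :
    (starRingEnd ℂ) (mordellH (x - 1 / 2) τ) =
      -(starRingEnd ℂ) (mordellH (x + 1 / 2) τ) +
        2 / Real.sqrt τ *
          Complex.exp (-(Real.pi * Complex.I / 4) - Real.pi * Complex.I * x ^ 2 / τ) := by
  have h := one_step (x - 1 / 2) τ hτ
  have h2 : x - 1 / 2 + 1 = x + 1 / 2 := by ring
  rw [h2] at h
  have h3 : (((x - 1 / 2 : ℝ) : ℂ) + 1 / 2) ^ 2 = (x : ℂ) ^ 2 := by push_cast; ring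
  rw [h3] at h
  have h4 := congrArg (starRingEnd ℂ) h
  rw [map_add] at h4
  have h5 : (starRingEnd ℂ) (2 / Real.sqrt τ *
      Complex.exp (Real.pi * Complex.I / 4 + Real.pi * Complex.I * (x : ℂ) ^ 2 / τ))
      = 2 / Real.sqrt τ *
        Complex.exp (-(Real.pi * Complex.I / 4) - Real.pi * Complex.I * (x : ℂ) ^ 2 / τ) := by
    rw [map_mul, ← Complex.exp_conj]
    have hc1 : (starRingEnd ℂ) (2 / ((Real.sqrt τ : ℝ) : ℂ)) = 2 / ((Real.sqrt τ : ℝ) : ℂ) := by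
      rw [map_div₀, Complex.conj_ofReal, map_ofNat]
    rw [hc1]
    congr 1
    simp only [map_add, map_div₀, map_mul, map_pow, Complex.conj_I, Complex.conj_ofReal, map_ofNat]
    ring
  rw [h5] at h4
  linear_combination h4

theorem mordell_iterated_shift (z τ : ℝ) (hτ : 0 < τ) (m : ℕ) :
    (starRingEnd ℂ) (mordellH (z - 1 / 2) τ) =
      (-1 : ℂ) ^ (m + 1) * (starRingEnd ℂ) (mordellH (z + m + 1 / 2) τ) +
        2 / Real.sqrt τ *
          Complex.exp (-(Real.pi * Complex.I / 4) - Real.pi * Complex.I * z ^ 2 / τ) *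
            F m (1 / 2 - z / τ) (-1 / (2 * τ)) := by
  induction m with
  | zero =>
    have h := conj_step z τ hτ
    have hF : F 0 (1 / 2 - z / τ) (-1 / (2 * τ)) = 1 := by
      simp [F]
    have hz : (z + (0 : ℕ) + 1 / 2 : ℝ) = z + 1 / 2 := by push_cast; ring
    rw [hF, hz, pow_one]
    linear_combination h
  | succ n ih =>
    have h := conj_step (z + n + 1) τ hτ
    have e1 : (z + n + 1 - 1 / 2 : ℝ) = z + n + 1 / 2 := by ring
    have e2 : (z + n + 1 + 1 / 2 : ℝ) = z + (n + 1 : ℕ) + 1 / 2 := by push_cast; ring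
    rw [e1, e2] at h
    have hF : F (n + 1) (1 / 2 - z / τ) (-1 / (2 * τ))
        = F n (1 / 2 - z / τ) (-1 / (2 * τ))
          + Complex.exp (2 * Real.pi * Complex.I *
              ((1 / 2 - z / τ : ℝ) * (n + 1 : ℕ) + (-1 / (2 * τ) : ℝ) * ((n + 1 : ℕ) : ℂ) ^ 2)) := by
      rw [F, F, Finset.sum_range_succ]
    have key : Complex.exp (-(Real.pi * Complex.I / 4) - Real.pi * Complex.I * (z : ℂ) ^ 2 / τ) *
        Complex.exp (2 * Real.pi * Complex.I *
          ((1 / 2 - z / τ : ℝ) * (n + 1 : ℕ) + (-1 / (2 * τ) : ℝ) * ((n + 1 : ℕ) : ℂ) ^ 2))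
        = (-1 : ℂ) ^ (n + 1) *
          Complex.exp (-(Real.pi * Complex.I / 4)
            - Real.pi * Complex.I * ((z + n + 1 : ℝ) : ℂ) ^ 2 / τ) := by
      rw [← Complex.exp_add]
      have harg : -(Real.pi * Complex.I / 4) - Real.pi * Complex.I * (z : ℂ) ^ 2 / τ
          + 2 * Real.pi * Complex.I *
            ((1 / 2 - z / τ : ℝ) * (n + 1 : ℕ) + (-1 / (2 * τ) : ℝ) * ((n + 1 : ℕ) : ℂ) ^ 2)
          = (-(Real.pi * Complex.I / 4)
              - Real.pi * Complex.I * ((z + n + 1 : ℝ) : ℂ) ^ 2 / τ)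
            + ((n + 1 : ℕ) : ℂ) * (Real.pi * Complex.I) := by
        have hτ0 : (τ : ℂ) ≠ 0 := by exact_mod_cast hτ.ne'
        push_cast
        field_simp
        ring
      rw [harg, Complex.exp_add]
      have : Complex.exp (((n + 1 : ℕ) : ℂ) * (Real.pi * Complex.I))
          = (-1 : ℂ) ^ (n + 1) := by
        rw [Complex.exp_nat_mul, Complex.exp_pi_mul_I]
      rw [this]
      ring
    rw [hF, ih, h]
    linear_combination (-(2 / ((Real.sqrt τ : ℝ) : ℂ))) * key
end

section
/- With coefficients defined by a_{0,1} = 1 and a_{j+1,k} = −(2πi/n)((k−1)a_{j,k−1} + (k/n)a_{j,k}𝟙_{k≤j+1}), the bound |a_{j,k}| ≤ (4πj/n)^j holds for all j ≥ 1 and 1 ≤ k ≤ j+1. -/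
open Complex Real

theorem coefficient_recursion_bound
    (n : ℕ) (hn : 1 ≤ n) (a : ℕ → ℕ → ℂ)
    (ha01 : a 0 1 = 1)
    (ha0 : ∀ j : ℕ, a j 0 = 0)
    (haBig : ∀ j k : ℕ, j + 1 < k → a j k = 0)
    (haRec : ∀ j k : ℕ, 1 ≤ k → k ≤ j + 2 →
      a (j + 1) k = -(2 * Real.pi * Complex.I / n) *
        ((k - 1 : ℂ) * a j (k - 1) +
          (k : ℂ) / n * a j k * (if k ≤ j + 1 then 1 else 0))) :
    ∀ j k : ℕ, 1 ≤ j → 1 ≤ k → k ≤ j + 1 →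
      ‖a j k‖ ≤ (4 * Real.pi * j / n) ^ j := by
  have hn1 : (1:ℝ) ≤ (n:ℝ) := by exact_mod_cast hn
  have hnpos : (0:ℝ) < n := by linarith
  have pipos := Real.pi_pos
  have main : ∀ j k : ℕ,
      ‖a j k‖ ≤ if j = 0 then 1 else (4 * Real.pi * j / n) ^ j := by
    intro j
    induction j with
    | zero =>
      intro k
      simp only [if_pos rfl]
      match k with
      | 0 => simp [ha0]
      | 1 => simp [ha01]
      | (m+2) => rw [haBig 0 (m+2) (by omega)]; simp
    | succ j ih =>
      intro k
      rw [if_neg (Nat.succ_ne_zero j)]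
      have hBnn : (0:ℝ) ≤ (if j = 0 then 1 else (4 * Real.pi * j / n) ^ j) := by
        split <;> positivity
      set B : ℝ := if j = 0 then 1 else (4 * Real.pi * j / n) ^ j with hB
      have hBle : B ≤ (4 * Real.pi * (↑(j+1):ℝ) / n) ^ j := by
        rw [hB]; split
        · next h => subst h; simp
        · refine pow_le_pow_left₀ (by positivity) ?_ j
          rw [div_le_div_iff₀ hnpos hnpos]
          push_cast
          nlinarith
      rcases Nat.eq_zero_or_pos k with hk0 | hk1
      · subst hk0; rw [ha0]; simp; positivity
      by_cases hkle : k ≤ j + 2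
      swap
      · rw [haBig _ _ (by omega)]; simp; positivity
      rw [haRec j k hk1 hkle, norm_mul]
      have habs : ‖(-(2 * ↑Real.pi * Complex.I / ↑n))‖ = 2 * Real.pi / n := by
        rw [norm_neg, norm_div, norm_mul, norm_mul]
        simp [abs_of_pos pipos]
      rw [habs]
      have hk1R : (1:ℝ) ≤ (k:ℝ) := by exact_mod_cast hk1
      have A1 : ‖a j (k-1)‖ ≤ B := ih (k-1)
      have A2 : ‖a j k‖ ≤ B := ih k
      have h1 : ‖(↑k - 1 : ℂ) * a j (k - 1)‖ ≤ ((k:ℝ) - 1) * B := by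
        rw [norm_mul]
        have e : ((k:ℂ) - 1) = (((k:ℝ) - 1 : ℝ) : ℂ) := by push_cast; ring
        rw [e, Complex.norm_real, Real.norm_eq_abs, _root_.abs_of_nonneg (by linarith)]
        exact mul_le_mul_of_nonneg_left A1 (by linarith)
      have h2 : ‖(↑k : ℂ) / ↑n * a j k * (if k ≤ j + 1 then 1 else 0)‖ ≤
          (k:ℝ) / n * B * (if k ≤ j + 1 then 1 else 0) := by
        split
        · simp only [mul_one]
          rw [norm_mul, norm_div, Complex.norm_natCast, Complex.norm_natCast]
          exact mul_le_mul_of_nonneg_left A2 (by positivity)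
        · simp
      have T : ‖(↑k - 1 : ℂ) * a j (k - 1) +
          (↑k : ℂ) / ↑n * a j k * (if k ≤ j + 1 then 1 else 0)‖ ≤ 2 * ((j:ℝ) + 1) * B := by
        refine le_trans (norm_add_le _ _) ?_
        refine le_trans (add_le_add h1 h2) ?_
        by_cases hk' : k ≤ j + 1
        · rw [if_pos hk']
          have hkj : (k:ℝ) ≤ (j:ℝ) + 1 := by exact_mod_cast hk'
          have hkn : (k:ℝ) / n ≤ (k:ℝ) := by
            rw [div_le_iff₀ hnpos]; nlinarith
          rw [mul_one]
          have : (k:ℝ) / n * B ≤ (k:ℝ) * B := mul_le_mul_of_nonneg_right hkn hBnn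
          nlinarith [mul_le_mul_of_nonneg_right hkj hBnn]
        · rw [if_neg hk', mul_zero, add_zero]
          have hkj : (k:ℝ) ≤ (j:ℝ) + 2 := by
            have : k ≤ j + 2 := hkle
            exact_mod_cast this
          nlinarith [mul_le_mul_of_nonneg_right (show (k:ℝ) - 1 ≤ (j:ℝ) + 1 by linarith) hBnn]
      calc 2 * Real.pi / ↑n * ‖_‖ ≤ 2 * Real.pi / ↑n * (2 * ((j:ℝ) + 1) * B) := by
            exact mul_le_mul_of_nonneg_left T (by positivity)
        _ = (4 * Real.pi * ((j:ℝ) + 1) / n) * B := by ring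
        _ ≤ (4 * Real.pi * ((j:ℝ) + 1) / n) * (4 * Real.pi * (↑(j+1):ℝ) / n) ^ j := by
            exact mul_le_mul_of_nonneg_left hBle (by positivity)
        _ = (4 * Real.pi * (↑(j+1):ℝ) / n) ^ (j + 1) := by
            push_cast; rw [pow_succ]; ring
  intro j k hj hk hkle
  have h := main j k
  rwa [if_neg (by omega)] at h
end
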